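/- arXiv:1906.01333 — 3 statements merged into one kernel-verified Lean document; each statement's English description precedes it below -/
import Mathlib

section
/- Let Ω₁, Ω₂ be compact subsets of Euclidean spaces and π ∈ L log L(Ω₁ × Ω₂). Then the marginal (P₂)_#π(x₂) = ∫_{Ω₁} π(x₁,x₂) dx₁ belongs to L log L(Ω₂), and its Luxemburg norm satisfies ‖(P₂)_#π‖_{Φ_log} ≤ max(1, L(Ω₁)) · ‖π‖_{Φ_log}. -/
open MeasureTheory
open Pointwise

/-- `log⁺(x) = max (log x) 0`. -/
noncomputable def logPlus (x : ℝ) : ℝ := max (Real.log x) 0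

/-- The Young function `Φ_log(s) = s log⁺ s`. -/
noncomputable def PhiLog (s : ℝ) : ℝ := s * logPlus s

/-- The Luxemburg norm `‖f‖_Φ = inf { γ > 0 : ∫ Φ(|f|/γ) dμ ≤ 1 }`. -/
noncomputable def luxemburgNorm {X : Type*} [MeasurableSpace X] (Φ : ℝ → ℝ)
    (μ : Measure X) (f : X → ℝ) : ℝ :=
  sInf {γ : ℝ | 0 < γ ∧ ∫⁻ x, ENNReal.ofReal (Φ (|f x| / γ)) ∂μ ≤ 1}


lemma logPlus_nonneg (x : ℝ) : 0 ≤ logPlus x := le_max_right _ _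

lemma logPlus_mono {a b : ℝ} (ha : 0 ≤ a) (hab : a ≤ b) : logPlus a ≤ logPlus b := by
  rcases eq_or_lt_of_le ha with h | h
  · simp [logPlus, ← h, Real.log_zero, logPlus_nonneg]
  · exact max_le_max (Real.log_le_log h hab) le_rfl

lemma phiLog_nonneg {x : ℝ} (hx : 0 ≤ x) : 0 ≤ PhiLog x :=
  mul_nonneg hx (logPlus_nonneg x)

lemma phiLog_mono {a b : ℝ} (ha : 0 ≤ a) (hab : a ≤ b) : PhiLog a ≤ PhiLog b :=
  mul_le_mul hab (logPlus_mono ha hab) (logPlus_nonneg a) (ha.trans hab)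

lemma logPlus_mul_le {a b : ℝ} (ha : 0 ≤ a) (hb : 0 ≤ b) :
    logPlus (a * b) ≤ logPlus a + logPlus b := by
  rcases eq_or_lt_of_le ha with h | h
  · simp only [← h, zero_mul]
    simpa [logPlus, Real.log_zero] using add_nonneg (logPlus_nonneg a) (logPlus_nonneg b)
  rcases eq_or_lt_of_le hb with h' | h'
  · simp only [← h', mul_zero]
    simpa [logPlus, Real.log_zero] using add_nonneg (logPlus_nonneg a) (logPlus_nonneg b)
  · rw [logPlus, Real.log_mul h.ne' h'.ne']
    exact max_le (add_le_add (le_max_left _ _) (le_max_left _ _))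
      (add_nonneg (logPlus_nonneg a) (logPlus_nonneg b))

lemma phiLog_mul_le {a b : ℝ} (ha : 0 ≤ a) (hb : 0 ≤ b) :
    PhiLog (a * b) ≤ PhiLog a * b + a * PhiLog b := by
  have := mul_le_mul_of_nonneg_left (logPlus_mul_le ha hb) (mul_nonneg ha hb)
  calc PhiLog (a * b) ≤ a * b * (logPlus a + logPlus b) := this
    _ = PhiLog a * b + a * PhiLog b := by simp [PhiLog]; ring

lemma phiLog_smul_le {l t : ℝ} (hl0 : 0 ≤ l) (hl : l ≤ 1) (ht : 0 ≤ t) :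
    PhiLog (l * t) ≤ l * PhiLog t := by
  have h1 : l * t ≤ t := by nlinarith
  have := logPlus_mono (mul_nonneg hl0 ht) h1
  calc PhiLog (l * t) ≤ l * t * logPlus t :=
        mul_le_mul_of_nonneg_left this (mul_nonneg hl0 ht)
    _ = l * PhiLog t := by rw [PhiLog]; ring

lemma phiLog_eqOn : ∀ x ∈ Set.Ici (0:ℝ), PhiLog x = max (x * Real.log x) 0 := by
  intro x hx
  rw [PhiLog, logPlus, mul_max_of_nonneg _ _ hx, mul_zero]

lemma convexOn_phiLog : ConvexOn ℝ (Set.Ici (0:ℝ)) PhiLog := by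
  have h := Real.convexOn_mul_log.sup (convexOn_const 0 (convex_Ici 0))
  exact h.congr (fun x hx => (phiLog_eqOn x hx).symm)

lemma continuousOn_phiLog : ContinuousOn PhiLog (Set.Ici (0:ℝ)) := by
  have : ContinuousOn (fun x => max (x * Real.log x) 0) (Set.Ici (0:ℝ)) :=
    (Real.continuous_mul_log.max continuous_const).continuousOn
  exact this.congr phiLog_eqOn

lemma measurable_phiLog : Measurable PhiLog :=
  measurable_id.mul (Real.measurable_log.max measurable_const)

lemma le_exp_add_phiLog {t : ℝ} (ht : 0 ≤ t) : t ≤ Real.exp 1 + PhiLog t := by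
  rcases le_or_gt t (Real.exp 1) with h | h
  · linarith [phiLog_nonneg ht]
  · have ht' : 0 < t := (Real.exp_pos 1).trans h
    have hlog : 1 ≤ Real.log t := by
      rw [Real.le_log_iff_exp_le ht']
      exact h.le
    have h2 : 1 ≤ logPlus t := le_max_of_le_left hlog
    have h3 : t ≤ PhiLog t := by rw [PhiLog]; nlinarith
    linarith [Real.exp_pos 1]

/-- If `π ∈ L log L(Ω₁ × Ω₂)` (`Ω₁, Ω₂` compact), then the marginal
`(P₂)_# π (x₂) = ∫_{Ω₁} π(x₁,x₂) dx₁` belongs to `L log L(Ω₂)` and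
`‖(P₂)_# π‖_{Φ_log} ≤ max(1, L(Ω₁)) ‖π‖_{Φ_log}`. -/
theorem marginal_mem_LlogL (n₁ n₂ : ℕ)
    (Ω₁ : Set (Fin n₁ → ℝ)) (Ω₂ : Set (Fin n₂ → ℝ))
    (hΩ₁ : IsCompact Ω₁) (hΩ₂ : IsCompact Ω₂)
    (π : (Fin n₁ → ℝ) × (Fin n₂ → ℝ) → ℝ) (hπ : Measurable π)
    (hπL : ∫⁻ p in Ω₁ ×ˢ Ω₂, ENNReal.ofReal (|π p| * logPlus |π p|) < ⊤) :
    (∫⁻ x₂ in Ω₂, ENNReal.ofReal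
        (|∫ x₁ in Ω₁, π (x₁, x₂)| * logPlus |∫ x₁ in Ω₁, π (x₁, x₂)|) < ⊤) ∧
    luxemburgNorm PhiLog (volume.restrict Ω₂) (fun x₂ => ∫ x₁ in Ω₁, π (x₁, x₂)) ≤
      max 1 (volume Ω₁).toReal *
        luxemburgNorm PhiLog (volume.restrict (Ω₁ ×ˢ Ω₂)) π := by
  classical
  set μ₁ := volume.restrict Ω₁ with hμ₁
  set μ₂ := volume.restrict Ω₂ with hμ₂
  set m : (Fin n₂ → ℝ) → ℝ := fun x₂ => ∫ x₁ in Ω₁, π (x₁, x₂) with hmdef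
  by_cases h0 : volume Ω₁ = 0
  · have hm0 : ∀ x₂, m x₂ = 0 := fun x₂ => by
      show (∫ x₁, π (x₁, x₂) ∂μ₁) = 0
      rw [hμ₁, Measure.restrict_eq_zero.mpr h0, integral_zero_measure]
    constructor
    · have : ∀ x₂, ENNReal.ofReal (|m x₂| * logPlus |m x₂|) = 0 := fun x₂ => by
        simp [hm0 x₂, logPlus, Real.log_zero]
      calc ∫⁻ x₂, ENNReal.ofReal (|m x₂| * logPlus |m x₂|) ∂μ₂
          = ∫⁻ _, 0 ∂μ₂ := by simp only [this]
        _ = 0 := lintegral_zero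
        _ < ⊤ := by simp
    · have hset : {γ : ℝ | 0 < γ ∧
          ∫⁻ x, ENNReal.ofReal (PhiLog (|m x| / γ)) ∂μ₂ ≤ 1} = Set.Ioi 0 := by
        ext γ
        simp only [Set.mem_setOf_eq, Set.mem_Ioi, and_iff_left_iff_imp]
        intro _
        have : ∀ x, ENNReal.ofReal (PhiLog (|m x| / γ)) = 0 := fun x => by
          simp [hm0 x, PhiLog, logPlus, Real.log_zero]
        simp only [this, lintegral_zero]
        exact zero_le_one
      have hlhs : luxemburgNorm PhiLog μ₂ m = 0 := by
        rw [luxemburgNorm, hset, csInf_Ioi]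
      rw [hlhs]
      have h1 : 0 ≤ luxemburgNorm PhiLog (volume.restrict (Ω₁ ×ˢ Ω₂)) π :=
        Real.sInf_nonneg (fun γ hγ => hγ.1.le)
      have h2 : (0:ℝ) ≤ max 1 (volume Ω₁).toReal := le_max_of_le_left zero_le_one
      positivity
  · -- main case
    have hV₁ : volume Ω₁ ≠ ⊤ := hΩ₁.measure_lt_top.ne
    set l := (volume Ω₁).toReal with hldef
    have hlpos : 0 < l := ENNReal.toReal_pos h0 hV₁
    set c := max 1 l with hcdef
    have hc1 : (1:ℝ) ≤ c := le_max_left _ _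
    have hcpos : 0 < c := lt_of_lt_of_le one_pos hc1
    have hlc : l ≤ c := le_max_right _ _
    set ν := μ₁.prod μ₂ with hνdef
    have hrestr : volume.restrict (Ω₁ ×ˢ Ω₂) = ν := by
      rw [hνdef, hμ₁, hμ₂, Measure.prod_restrict, ← Measure.volume_eq_prod]
    haveI hfin₁ : IsFiniteMeasure μ₁ :=
      ⟨by rw [hμ₁, Measure.restrict_apply_univ]; exact hΩ₁.measure_lt_top⟩
    haveI hfin₂ : IsFiniteMeasure μ₂ :=
      ⟨by rw [hμ₂, Measure.restrict_apply_univ]; exact hΩ₂.measure_lt_top⟩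
    haveI : NeZero μ₁ := ⟨fun h => h0 (Measure.restrict_eq_zero.mp (hμ₁ ▸ h))⟩
    have hμ₁univ : (μ₁ Set.univ).toReal = l := by
      rw [hμ₁, Measure.restrict_apply_univ, hldef]
    -- measurability facts
    have hmm : StronglyMeasurable m := hπ.stronglyMeasurable.integral_prod_left'
    have hFmeas : ∀ γ : ℝ, Measurable fun p => PhiLog (|π p| / γ) := fun γ =>
      measurable_phiLog.comp ((hπ.abs).div_const γ)
    -- finiteness of ∫ Φ(|π|) over ν
    have hπL' : ∫⁻ p, ENNReal.ofReal (PhiLog |π p|) ∂ν < ⊤ := by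
      rw [← hrestr]; exact hπL
    -- integrability of π
    have hIabs : ∫⁻ p, ENNReal.ofReal |π p| ∂ν < ⊤ := by
      have hb : ∀ p, ENNReal.ofReal |π p| ≤
          ENNReal.ofReal (Real.exp 1) + ENNReal.ofReal (PhiLog |π p|) := fun p => by
        rw [← ENNReal.ofReal_add (Real.exp_pos 1).le (phiLog_nonneg (abs_nonneg _))]
        exact ENNReal.ofReal_le_ofReal (le_exp_add_phiLog (abs_nonneg _))
      calc ∫⁻ p, ENNReal.ofReal |π p| ∂ν
          ≤ ∫⁻ p, (ENNReal.ofReal (Real.exp 1) + ENNReal.ofReal (PhiLog |π p|)) ∂ν :=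
            lintegral_mono hb
        _ = ENNReal.ofReal (Real.exp 1) * ν Set.univ
            + ∫⁻ p, ENNReal.ofReal (PhiLog |π p|) ∂ν := by
            rw [lintegral_add_left measurable_const, lintegral_const]
        _ < ⊤ := by
            refine ENNReal.add_lt_top.mpr ⟨?_, hπL'⟩
            exact ENNReal.mul_lt_top ENNReal.ofReal_lt_top (measure_lt_top _ _)
    have hπint : Integrable π ν := by
      refine ⟨hπ.aestronglyMeasurable, ?_⟩
      rw [hasFiniteIntegral_iff_norm]
      simpa [Real.norm_eq_abs] using hIabs
    -- Key Jensen estimate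
    have key : ∀ γ : ℝ, 0 < γ →
        (∫⁻ p, ENNReal.ofReal (PhiLog (|π p| / γ)) ∂ν < ⊤) →
        ∫⁻ x₂, ENNReal.ofReal (PhiLog (|m x₂| / (c * γ))) ∂μ₂ ≤
          ENNReal.ofReal (1 / c) * ∫⁻ p, ENNReal.ofReal (PhiLog (|π p| / γ)) ∂ν := by
      intro γ hγ hfin
      set F : (Fin n₁ → ℝ) × (Fin n₂ → ℝ) → ℝ := fun p => PhiLog (|π p| / γ) with hFdef
      have hFm : Measurable F := hFmeas γ
      have hFnn : ∀ p, 0 ≤ F p := fun p => phiLog_nonneg (by positivity)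
      have hFint : Integrable F ν := by
        refine ⟨hFm.aestronglyMeasurable, ?_⟩
        rw [hasFiniteIntegral_iff_ofReal (Filter.Eventually.of_forall hFnn)]
        exact hfin
      have hslice : ∀ᵐ x₂ ∂μ₂, Integrable (fun x₁ => F (x₁, x₂)) μ₁ := hFint.prod_left_ae
      have hslice' : ∀ᵐ x₂ ∂μ₂, Integrable (fun x₁ => π (x₁, x₂)) μ₁ := hπint.prod_left_ae
      have hpt : ∀ᵐ x₂ ∂μ₂, ENNReal.ofReal (PhiLog (|m x₂| / (c * γ))) ≤
          ENNReal.ofReal (1 / c) * ∫⁻ x₁, ENNReal.ofReal (F (x₁, x₂)) ∂μ₁ := by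
        filter_upwards [hslice, hslice'] with x₂ hFx hπx
        set A := ∫ x₁, |π (x₁, x₂)| ∂μ₁ with hAdef
        have hAnn : 0 ≤ A := integral_nonneg (fun x₁ => abs_nonneg _)
        have hm_le : |m x₂| ≤ A := by
          have := norm_integral_le_integral_norm (μ := μ₁) (fun x₁ => π (x₁, x₂))
          simpa [Real.norm_eq_abs] using this
        set f : (Fin n₁ → ℝ) → ℝ := fun x₁ => |π (x₁, x₂)| / γ with hfdef
        have hfint : Integrable f μ₁ := hπx.abs.div_const γ
        have hfnn : ∀ x₁, 0 ≤ f x₁ := fun x₁ => by positivity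
        have hgi : Integrable (PhiLog ∘ f) μ₁ := hFx
        have hjen : PhiLog (⨍ x₁, f x₁ ∂μ₁) ≤ ⨍ x₁, PhiLog (f x₁) ∂μ₁ :=
          convexOn_phiLog.map_average_le continuousOn_phiLog isClosed_Ici
            (Filter.Eventually.of_forall (fun x₁ => hfnn x₁)) hfint hgi
        have havg : (⨍ x₁, f x₁ ∂μ₁) = l⁻¹ * (A / γ) := by
          rw [average_eq, measureReal_def, hμ₁univ, smul_eq_mul, hfdef, integral_div]
        have havg2 : (⨍ x₁, PhiLog (f x₁) ∂μ₁) = l⁻¹ * ∫ x₁, F (x₁, x₂) ∂μ₁ := by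
          rw [average_eq, measureReal_def, hμ₁univ, smul_eq_mul]
        have havgnn : 0 ≤ ⨍ x₁, f x₁ ∂μ₁ := by
          rw [havg]; positivity
        have hcγ : 0 < c * γ := mul_pos hcpos hγ
        have hreal : PhiLog (|m x₂| / (c * γ)) ≤ (1 / c) * ∫ x₁, F (x₁, x₂) ∂μ₁ := by
          have h1 : PhiLog (|m x₂| / (c * γ)) ≤ PhiLog (A / (c * γ)) := by
            apply phiLog_mono (div_nonneg (abs_nonneg _) hcγ.le)
            gcongr
          have h2 : A / (c * γ) = (l / c) * (l⁻¹ * (A / γ)) := by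
            field_simp
          have h3 : PhiLog ((l / c) * (l⁻¹ * (A / γ))) ≤ (l / c) * PhiLog (l⁻¹ * (A / γ)) :=
            phiLog_smul_le (div_nonneg hlpos.le hcpos.le) ((div_le_one hcpos).mpr hlc)
              (mul_nonneg (inv_nonneg.mpr hlpos.le) (div_nonneg hAnn hγ.le))
          have h4 : PhiLog (l⁻¹ * (A / γ)) ≤ l⁻¹ * ∫ x₁, F (x₁, x₂) ∂μ₁ := by
            rw [← havg]
            exact hjen.trans (le_of_eq havg2)
          calc PhiLog (|m x₂| / (c * γ)) ≤ PhiLog (A / (c * γ)) := h1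
            _ = PhiLog ((l / c) * (l⁻¹ * (A / γ))) := by rw [← h2]
            _ ≤ (l / c) * PhiLog (l⁻¹ * (A / γ)) := h3
            _ ≤ (l / c) * (l⁻¹ * ∫ x₁, F (x₁, x₂) ∂μ₁) :=
                mul_le_mul_of_nonneg_left h4 (div_nonneg hlpos.le hcpos.le)
            _ = (1 / c) * ∫ x₁, F (x₁, x₂) ∂μ₁ := by
                field_simp
        calc ENNReal.ofReal (PhiLog (|m x₂| / (c * γ)))
            ≤ ENNReal.ofReal ((1 / c) * ∫ x₁, F (x₁, x₂) ∂μ₁) :=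
              ENNReal.ofReal_le_ofReal hreal
          _ = ENNReal.ofReal (1 / c) * ENNReal.ofReal (∫ x₁, F (x₁, x₂) ∂μ₁) := by
              rw [ENNReal.ofReal_mul (by positivity)]
          _ = ENNReal.ofReal (1 / c) * ∫⁻ x₁, ENNReal.ofReal (F (x₁, x₂)) ∂μ₁ := by
              rw [ofReal_integral_eq_lintegral_ofReal hFx
                (Filter.Eventually.of_forall (fun x₁ => hFnn _))]
      calc ∫⁻ x₂, ENNReal.ofReal (PhiLog (|m x₂| / (c * γ))) ∂μ₂
          ≤ ∫⁻ x₂, ENNReal.ofReal (1 / c) * ∫⁻ x₁, ENNReal.ofReal (F (x₁, x₂)) ∂μ₁ ∂μ₂ :=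
            lintegral_mono_ae hpt
        _ = ENNReal.ofReal (1 / c) * ∫⁻ x₂, ∫⁻ x₁, ENNReal.ofReal (F (x₁, x₂)) ∂μ₁ ∂μ₂ :=
            lintegral_const_mul' _ _ ENNReal.ofReal_ne_top
        _ = ENNReal.ofReal (1 / c) * ∫⁻ p, ENNReal.ofReal (F p) ∂ν := by
            rw [← lintegral_prod_symm _ hFm.ennreal_ofReal.aemeasurable]
    constructor
    · show (∫⁻ x₂, ENNReal.ofReal (PhiLog |m x₂|) ∂μ₂) < ⊤
      have hmabs : ∫⁻ x₂, ENNReal.ofReal |m x₂| ∂μ₂ < ⊤ := by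
        have hm_ptwise : ∀ᵐ x₂ ∂μ₂, ENNReal.ofReal |m x₂| ≤
            ∫⁻ x₁, ENNReal.ofReal |π (x₁, x₂)| ∂μ₁ := by
          filter_upwards [hπint.prod_left_ae] with x₂ hπx
          have h1 : |m x₂| ≤ ∫ x₁, |π (x₁, x₂)| ∂μ₁ := by
            simpa [Real.norm_eq_abs] using
              norm_integral_le_integral_norm (μ := μ₁) (fun x₁ => π (x₁, x₂))
          calc ENNReal.ofReal |m x₂| ≤ ENNReal.ofReal (∫ x₁, |π (x₁, x₂)| ∂μ₁) :=
                ENNReal.ofReal_le_ofReal h1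
            _ = ∫⁻ x₁, ENNReal.ofReal |π (x₁, x₂)| ∂μ₁ :=
                ofReal_integral_eq_lintegral_ofReal hπx.abs
                  (Filter.Eventually.of_forall fun _ => abs_nonneg _)
        calc ∫⁻ x₂, ENNReal.ofReal |m x₂| ∂μ₂
            ≤ ∫⁻ x₂, ∫⁻ x₁, ENNReal.ofReal |π (x₁, x₂)| ∂μ₁ ∂μ₂ := lintegral_mono_ae hm_ptwise
          _ = ∫⁻ p, ENNReal.ofReal |π p| ∂ν :=
              (lintegral_prod_symm _ (hπ.abs.ennreal_ofReal.aemeasurable)).symm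
          _ < ⊤ := hIabs
      have hπL1 : ∫⁻ p, ENNReal.ofReal (PhiLog (|π p| / 1)) ∂ν < ⊤ := by
        simpa [div_one] using hπL'
      have hkey1' : ∫⁻ x₂, ENNReal.ofReal (PhiLog (|m x₂| / c)) ∂μ₂ < ⊤ := by
        have h := key 1 one_pos hπL1
        rw [mul_one] at h
        exact lt_of_le_of_lt h (ENNReal.mul_lt_top ENNReal.ofReal_lt_top hπL1)
      have hsplit : ∀ x₂, ENNReal.ofReal (PhiLog |m x₂|) ≤
          ENNReal.ofReal (PhiLog c / c) * ENNReal.ofReal |m x₂|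
            + ENNReal.ofReal c * ENNReal.ofReal (PhiLog (|m x₂| / c)) := by
        intro x₂
        have hb : 0 ≤ |m x₂| / c := div_nonneg (abs_nonneg _) hcpos.le
        have heq : c * (|m x₂| / c) = |m x₂| := by field_simp
        have h1 : PhiLog |m x₂| ≤ PhiLog c * (|m x₂| / c) + c * PhiLog (|m x₂| / c) := by
          have h := phiLog_mul_le hcpos.le hb
          rwa [heq] at h
        have h2 : PhiLog c * (|m x₂| / c) = (PhiLog c / c) * |m x₂| := by ring
        calc ENNReal.ofReal (PhiLog |m x₂|)
            ≤ ENNReal.ofReal ((PhiLog c / c) * |m x₂| + c * PhiLog (|m x₂| / c)) := by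
              apply ENNReal.ofReal_le_ofReal
              rw [← h2]; exact h1
          _ = ENNReal.ofReal (PhiLog c / c) * ENNReal.ofReal |m x₂|
              + ENNReal.ofReal c * ENNReal.ofReal (PhiLog (|m x₂| / c)) := by
              rw [ENNReal.ofReal_add
                    (mul_nonneg (div_nonneg (phiLog_nonneg hcpos.le) hcpos.le) (abs_nonneg _))
                    (mul_nonneg hcpos.le (phiLog_nonneg hb)),
                  ENNReal.ofReal_mul (div_nonneg (phiLog_nonneg hcpos.le) hcpos.le),
                  ENNReal.ofReal_mul hcpos.le]
      calc ∫⁻ x₂, ENNReal.ofReal (PhiLog |m x₂|) ∂μ₂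
          ≤ ∫⁻ x₂, (ENNReal.ofReal (PhiLog c / c) * ENNReal.ofReal |m x₂|
              + ENNReal.ofReal c * ENNReal.ofReal (PhiLog (|m x₂| / c))) ∂μ₂ :=
            lintegral_mono hsplit
        _ = ENNReal.ofReal (PhiLog c / c) * ∫⁻ x₂, ENNReal.ofReal |m x₂| ∂μ₂
            + ENNReal.ofReal c * ∫⁻ x₂, ENNReal.ofReal (PhiLog (|m x₂| / c)) ∂μ₂ := by
            rw [lintegral_add_left (f := fun x₂ => ENNReal.ofReal (PhiLog c / c) * ENNReal.ofReal |m x₂|)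
                (measurable_const.mul (hmm.measurable.abs.ennreal_ofReal)),
              lintegral_const_mul' _ _ ENNReal.ofReal_ne_top,
              lintegral_const_mul' _ _ ENNReal.ofReal_ne_top]
        _ < ⊤ := by
            refine ENNReal.add_lt_top.mpr ⟨?_, ?_⟩
            · exact ENNReal.mul_lt_top ENNReal.ofReal_lt_top hmabs
            · exact ENNReal.mul_lt_top ENNReal.ofReal_lt_top hkey1'
    · rw [luxemburgNorm, luxemburgNorm, hrestr]
      set S : Set ℝ := {γ : ℝ | 0 < γ ∧ ∫⁻ p, ENNReal.ofReal (PhiLog (|π p| / γ)) ∂ν ≤ 1}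
        with hSdef
      set T : Set ℝ := {γ : ℝ | 0 < γ ∧ ∫⁻ x₂, ENNReal.ofReal (PhiLog (|m x₂| / γ)) ∂μ₂ ≤ 1}
        with hTdef
      show sInf T ≤ c * sInf S
      have hTbdd : BddBelow T := ⟨0, fun γ hγ => hγ.1.le⟩
      have hSne : S.Nonempty := by
        obtain ⟨J, hJ, hIJ⟩ : ∃ J : ℝ, 0 ≤ J ∧
            (∫⁻ p, ENNReal.ofReal (PhiLog |π p|) ∂ν) = ENNReal.ofReal J :=
          ⟨(∫⁻ p, ENNReal.ofReal (PhiLog |π p|) ∂ν).toReal, ENNReal.toReal_nonneg,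
            (ENNReal.ofReal_toReal hπL'.ne).symm⟩
        have hγ1 : (1:ℝ) ≤ J + 1 := by linarith
        have hγpos : (0:ℝ) < J + 1 := by linarith
        refine ⟨J + 1, hγpos, ?_⟩
        have hpt : ∀ p, ENNReal.ofReal (PhiLog (|π p| / (J + 1))) ≤
            ENNReal.ofReal (J + 1)⁻¹ * ENNReal.ofReal (PhiLog |π p|) := fun p => by
          rw [← ENNReal.ofReal_mul (inv_nonneg.mpr hγpos.le)]
          apply ENNReal.ofReal_le_ofReal
          have h := phiLog_smul_le (inv_nonneg.mpr hγpos.le) (inv_le_one_of_one_le₀ hγ1)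
            (abs_nonneg (π p))
          rwa [← div_eq_inv_mul] at h
        calc ∫⁻ p, ENNReal.ofReal (PhiLog (|π p| / (J + 1))) ∂ν
            ≤ ∫⁻ p, ENNReal.ofReal (J + 1)⁻¹ * ENNReal.ofReal (PhiLog |π p|) ∂ν :=
              lintegral_mono hpt
          _ = ENNReal.ofReal (J + 1)⁻¹ * ∫⁻ p, ENNReal.ofReal (PhiLog |π p|) ∂ν :=
              lintegral_const_mul' _ _ ENNReal.ofReal_ne_top
          _ ≤ 1 := by
              rw [hIJ, ← ENNReal.ofReal_mul (inv_nonneg.mpr hγpos.le)]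
              apply ENNReal.ofReal_le_one.mpr
              calc (J + 1)⁻¹ * J ≤ (J + 1)⁻¹ * (J + 1) := by
                    gcongr
                    linarith
                _ = 1 := inv_mul_cancel₀ hγpos.ne'
      have hmap : ∀ γ ∈ S, c * γ ∈ T := by
        intro γ hγS
        obtain ⟨hγpos, hγle⟩ := hγS
        refine ⟨mul_pos hcpos hγpos, ?_⟩
        have hfin : ∫⁻ p, ENNReal.ofReal (PhiLog (|π p| / γ)) ∂ν < ⊤ :=
          lt_of_le_of_lt hγle ENNReal.one_lt_top
        calc ∫⁻ x₂, ENNReal.ofReal (PhiLog (|m x₂| / (c * γ))) ∂μ₂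
            ≤ ENNReal.ofReal (1 / c) * ∫⁻ p, ENNReal.ofReal (PhiLog (|π p| / γ)) ∂ν :=
              key γ hγpos hfin
          _ ≤ ENNReal.ofReal (1 / c) * 1 := mul_le_mul_right hγle _
          _ ≤ 1 := by
              rw [mul_one]
              exact ENNReal.ofReal_le_one.mpr ((div_le_one hcpos).mpr hc1)
      have hsub : c • S ⊆ T := by
        rintro x ⟨γ, hγ, rfl⟩
        simpa [smul_eq_mul] using hmap γ hγ
      calc sInf T ≤ sInf (c • S) := csInf_le_csInf hTbdd hSne.smul_set hsub
        _ = c * sInf S := by rw [Real.sInf_smul_of_nonneg hcpos.le, smul_eq_mul]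
end

section
/- Let Ω₁, Ω₂ be compact subsets of Euclidean spaces with positive Lebesgue measure. If α ⊕ β ∈ L_exp(Ω₁ × Ω₂), where (α ⊕ β)(x₁,x₂) = α(x₁) + β(x₂), then α ∈ L_exp(Ω₁) and β ∈ L_exp(Ω₂). -/
open MeasureTheory Filter

/-- The Young function `Φ_exp(s) = s` for `s ≤ 1` and `e^(s-1)` for `s > 1`. -/
noncomputable def PhiExp (s : ℝ) : ℝ := if s ≤ 1 then s else Real.exp (s - 1)

lemma measurable_phiExp : Measurable PhiExp := by
  unfold PhiExp
  exact Measurable.ite (measurableSet_le measurable_id measurable_const)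
    measurable_id ((measurable_id.sub measurable_const).exp)

lemma phiExp_nonneg {s : ℝ} (hs : 0 ≤ s) : 0 ≤ PhiExp s := by
  unfold PhiExp; split
  · exact hs
  · exact (Real.exp_pos _).le

lemma phiExp_mono : Monotone PhiExp := by
  intro a b hab
  unfold PhiExp
  split <;> split
  · exact hab
  · rename_i h1 h2
    calc a ≤ 1 := h1
    _ = Real.exp 0 := Real.exp_zero.symm
    _ ≤ Real.exp (b - 1) := Real.exp_le_exp.2 (by linarith)
  · rename_i h1 h2; linarith
  · exact Real.exp_le_exp.2 (by linarith)

lemma phiExp_le_exp (s : ℝ) : PhiExp s ≤ Real.exp s := by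
  unfold PhiExp; split
  · linarith [Real.add_one_le_exp s]
  · exact Real.exp_le_exp.2 (by linarith)

lemma exp_le_phiExp {s : ℝ} (hs : 0 ≤ s) :
    Real.exp s ≤ Real.exp 1 * PhiExp s + Real.exp 1 := by
  unfold PhiExp; split
  · rename_i h1
    have h2 : Real.exp s ≤ Real.exp 1 := Real.exp_le_exp.2 h1
    nlinarith [Real.exp_pos 1]
  · rename_i h1
    have : Real.exp 1 * Real.exp (s - 1) = Real.exp s := by
      rw [← Real.exp_add]; ring_nf
    nlinarith [Real.exp_pos 1]

/-- Membership in the Orlicz space `L_exp`: finiteness of the Luxemburg norm,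
i.e. `∃ γ > 0` with `∫ Φ_exp(|f|/γ) dμ ≤ 1`. -/
def MemLexp {X : Type*} [MeasurableSpace X] (μ : Measure X) (f : X → ℝ) : Prop :=
  ∃ γ : ℝ, 0 < γ ∧ ∫⁻ x, ENNReal.ofReal (PhiExp (|f x| / γ)) ∂μ ≤ 1

lemma memLexp_of_lt_top {X : Type*} [MeasurableSpace X] (μ : Measure X) (f : X → ℝ)
    (hf : Measurable f) (γ : ℝ) (hγ : 0 < γ)
    (hfin : ∫⁻ x, ENNReal.ofReal (PhiExp (|f x| / γ)) ∂μ < ⊤) : MemLexp μ f := by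
  set F : ℕ → X → ENNReal := fun k x => ENNReal.ofReal (PhiExp (|f x| / ((k + 1) * γ)))
  have hFmeas : ∀ k, Measurable (F k) := fun k =>
    (measurable_phiExp.comp ((hf.abs).div_const _)).ennreal_ofReal
  have hbound : ∀ k, ∀ᵐ x ∂μ, F k x ≤ ENNReal.ofReal (PhiExp (|f x| / γ)) := by
    intro k
    refine Filter.Eventually.of_forall fun x => ?_
    apply ENNReal.ofReal_le_ofReal
    apply phiExp_mono
    apply div_le_div_of_nonneg_left (abs_nonneg _) hγ
    nlinarith [Nat.cast_nonneg (α := ℝ) k]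
  have hlim : ∀ᵐ x ∂μ, Tendsto (fun k => F k x) atTop (nhds 0) := by
    refine Filter.Eventually.of_forall fun x => ?_
    have hden : Tendsto (fun k : ℕ => ((k : ℝ) + 1) * γ) atTop atTop :=
      (tendsto_natCast_atTop_atTop.atTop_add tendsto_const_nhds).atTop_mul_const hγ
    have h1 : Tendsto (fun k : ℕ => |f x| / (((k : ℝ) + 1) * γ)) atTop (nhds 0) :=
      Filter.Tendsto.div_atTop (tendsto_const_nhds) hden
    have h2 : Tendsto (fun k : ℕ => PhiExp (|f x| / (((k : ℝ) + 1) * γ))) atTop (nhds 0) := by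
      have heq : ∀ᶠ k : ℕ in atTop, PhiExp (|f x| / (((k : ℝ) + 1) * γ)) = |f x| / (((k : ℝ) + 1) * γ) := by
        filter_upwards [h1.eventually (eventually_le_nhds (by norm_num : (0:ℝ) < 1))] with k hk
        unfold PhiExp; rw [if_pos hk]
      exact Tendsto.congr' (Filter.EventuallyEq.symm heq) h1
    have := (ENNReal.continuous_ofReal.tendsto 0).comp h2
    simpa [Function.comp_def] using this
  have htend : Tendsto (fun k => ∫⁻ x, F k x ∂μ) atTop (nhds 0) := by
    have := tendsto_lintegral_of_dominated_convergence
      (fun x => ENNReal.ofReal (PhiExp (|f x| / γ))) hFmeas hbound hfin.ne hlim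
    simpa using this
  have hev : ∀ᶠ k in atTop, ∫⁻ x, F k x ∂μ ≤ 1 := by
    filter_upwards [htend.eventually (eventually_le_nhds (by norm_num : (0:ENNReal) < 1))]
      with k hk using hk
  obtain ⟨k, hk⟩ := hev.exists
  exact ⟨(k + 1) * γ, by positivity, hk⟩

lemma memLexp_of_add_const {X : Type*} [MeasurableSpace X] (μ : Measure X)
    [IsFiniteMeasure μ] (f : X → ℝ) (hf : Measurable f) (c γ : ℝ) (hγ : 0 < γ)
    (hfin : ∫⁻ x, ENNReal.ofReal (PhiExp (|f x + c| / γ)) ∂μ < ⊤) : MemLexp μ f := by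
  apply memLexp_of_lt_top μ f hf γ hγ
  set K : ℝ := Real.exp (|c| / γ) * Real.exp 1 with hK
  have hKpos : 0 < K := by positivity
  have hpt : ∀ x, PhiExp (|f x| / γ) ≤ K * PhiExp (|f x + c| / γ) + K := by
    intro x
    have h0 : |f x| / γ ≤ |f x + c| / γ + |c| / γ := by
      rw [← add_div]
      apply div_le_div_of_nonneg_right _ hγ.le
      calc |f x| = |(f x + c) + (-c)| := by ring_nf
      _ ≤ |f x + c| + |(-c)| := abs_add_le _ _
      _ = |f x + c| + |c| := by rw [abs_neg]
    have h1 : PhiExp (|f x| / γ) ≤ Real.exp (|f x + c| / γ + |c| / γ) :=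
      le_trans (phiExp_mono h0) (phiExp_le_exp _)
    have h2 : Real.exp (|f x + c| / γ + |c| / γ)
        = Real.exp (|c| / γ) * Real.exp (|f x + c| / γ) := by
      rw [← Real.exp_add]; ring_nf
    have h3 : Real.exp (|f x + c| / γ)
        ≤ Real.exp 1 * PhiExp (|f x + c| / γ) + Real.exp 1 :=
      exp_le_phiExp (by positivity)
    have h4 : (0:ℝ) < Real.exp (|c| / γ) := Real.exp_pos _
    calc PhiExp (|f x| / γ) ≤ Real.exp (|c| / γ) * Real.exp (|f x + c| / γ) := by
          rw [← h2]; exact h1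
    _ ≤ Real.exp (|c| / γ) * (Real.exp 1 * PhiExp (|f x + c| / γ) + Real.exp 1) := by
          exact mul_le_mul_of_nonneg_left h3 h4.le
    _ = K * PhiExp (|f x + c| / γ) + K := by rw [hK]; ring
  have hmeas : Measurable fun x => ENNReal.ofReal (PhiExp (|f x + c| / γ)) :=
    (measurable_phiExp.comp (((hf.add_const c).abs).div_const _)).ennreal_ofReal
  calc ∫⁻ x, ENNReal.ofReal (PhiExp (|f x| / γ)) ∂μ
      ≤ ∫⁻ x, (ENNReal.ofReal K * ENNReal.ofReal (PhiExp (|f x + c| / γ))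
          + ENNReal.ofReal K) ∂μ := by
        apply lintegral_mono
        intro x
        calc ENNReal.ofReal (PhiExp (|f x| / γ))
            ≤ ENNReal.ofReal (K * PhiExp (|f x + c| / γ) + K) :=
              ENNReal.ofReal_le_ofReal (hpt x)
        _ ≤ ENNReal.ofReal (K * PhiExp (|f x + c| / γ)) + ENNReal.ofReal K :=
              ENNReal.ofReal_add_le
        _ = ENNReal.ofReal K * ENNReal.ofReal (PhiExp (|f x + c| / γ))
              + ENNReal.ofReal K := by
              rw [ENNReal.ofReal_mul hKpos.le]
  _ = ENNReal.ofReal K * ∫⁻ x, ENNReal.ofReal (PhiExp (|f x + c| / γ)) ∂μ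
        + ENNReal.ofReal K * μ Set.univ := by
        rw [lintegral_add_right _ measurable_const, lintegral_const_mul _ hmeas,
          lintegral_const]
  _ < ⊤ := by
        apply ENNReal.add_lt_top.2
        constructor
        · exact ENNReal.mul_lt_top ENNReal.ofReal_lt_top hfin
        · exact ENNReal.mul_lt_top ENNReal.ofReal_lt_top (measure_lt_top μ _)

/-- If `α ⊕ β : (x₁,x₂) ↦ α(x₁) + β(x₂)` belongs to `L_exp(Ω₁ × Ω₂)` for compact sets
`Ω₁, Ω₂` of positive Lebesgue measure, then `α ∈ L_exp(Ω₁)` and `β ∈ L_exp(Ω₂)`. -/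
theorem oplus_mem_Lexp_implies_components (n₁ n₂ : ℕ)
    (Ω₁ : Set (Fin n₁ → ℝ)) (Ω₂ : Set (Fin n₂ → ℝ))
    (hΩ₁ : IsCompact Ω₁) (hΩ₂ : IsCompact Ω₂)
    (hpos₁ : 0 < volume Ω₁) (hpos₂ : 0 < volume Ω₂)
    (α : (Fin n₁ → ℝ) → ℝ) (β : (Fin n₂ → ℝ) → ℝ)
    (hα : Measurable α) (hβ : Measurable β)
    (h : MemLexp (volume.restrict (Ω₁ ×ˢ Ω₂)) (fun p => α p.1 + β p.2)) :
    MemLexp (volume.restrict Ω₁) α ∧ MemLexp (volume.restrict Ω₂) β := by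
  obtain ⟨γ, hγ, hint⟩ := h
  set μ₁ := volume.restrict Ω₁
  set μ₂ := volume.restrict Ω₂
  haveI : IsFiniteMeasure μ₁ :=
    ⟨by rw [Measure.restrict_apply_univ]; exact hΩ₁.measure_lt_top⟩
  haveI : IsFiniteMeasure μ₂ :=
    ⟨by rw [Measure.restrict_apply_univ]; exact hΩ₂.measure_lt_top⟩
  have hμ₁ne : μ₁ ≠ 0 := by
    intro h0
    rw [← Measure.restrict_apply_univ Ω₁, show volume.restrict Ω₁ = μ₁ from rfl, h0] at hpos₁
    simp at hpos₁
  have hμ₂ne : μ₂ ≠ 0 := by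
    intro h0
    rw [← Measure.restrict_apply_univ Ω₂, show volume.restrict Ω₂ = μ₂ from rfl, h0] at hpos₂
    simp at hpos₂
  set g : ((Fin n₁ → ℝ) × (Fin n₂ → ℝ)) → ENNReal :=
    fun p => ENNReal.ofReal (PhiExp (|α p.1 + β p.2| / γ)) with hg
  have hgmeas : Measurable g :=
    (measurable_phiExp.comp
      ((((hα.comp measurable_fst).add (hβ.comp measurable_snd)).abs).div_const γ)).ennreal_ofReal
  have hprodeq : volume.restrict (Ω₁ ×ˢ Ω₂) = μ₁.prod μ₂ := by
    rw [Measure.volume_eq_prod, Measure.prod_restrict]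
  have hint' : ∫⁻ p, g p ∂(μ₁.prod μ₂) ≤ 1 := by
    rw [← hprodeq]; exact hint
  constructor
  · -- component α
    have hfub : ∫⁻ y, ∫⁻ x, g (x, y) ∂μ₁ ∂μ₂ ≤ 1 := by
      rw [← lintegral_prod_symm g hgmeas.aemeasurable]; exact hint'
    have hFmeas : Measurable fun y => ∫⁻ x, g (x, y) ∂μ₁ :=
      hgmeas.lintegral_prod_left'
    have hae : ∀ᵐ y ∂μ₂, (∫⁻ x, g (x, y) ∂μ₁) < ⊤ :=
      ae_lt_top hFmeas (lt_of_le_of_lt hfub ENNReal.one_lt_top).ne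
    haveI : (ae μ₂).NeBot := ae_neBot.2 hμ₂ne
    obtain ⟨y₀, hy₀⟩ := hae.exists
    exact memLexp_of_add_const μ₁ α hα (β y₀) γ hγ hy₀
  · -- component β
    have hfub : ∫⁻ x, ∫⁻ y, g (x, y) ∂μ₂ ∂μ₁ ≤ 1 := by
      rw [← lintegral_prod g hgmeas.aemeasurable]; exact hint'
    have hFmeas : Measurable fun x => ∫⁻ y, g (x, y) ∂μ₂ :=
      hgmeas.lintegral_prod_right'
    have hae : ∀ᵐ x ∂μ₁, (∫⁻ y, g (x, y) ∂μ₂) < ⊤ :=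
      ae_lt_top hFmeas (lt_of_le_of_lt hfub ENNReal.one_lt_top).ne
    haveI : (ae μ₁).NeBot := ae_neBot.2 hμ₁ne
    obtain ⟨x₀, hx₀⟩ := hae.exists
    have : ∫⁻ y, ENNReal.ofReal (PhiExp (|β y + α x₀| / γ)) ∂μ₂ < ⊤ := by
      convert hx₀ using 2 with y
      rw [hg]
      simp only [add_comm]
    exact memLexp_of_add_const μ₂ β hβ (α x₀) γ hγ this
end

section
/- The function f(x) = exp(−1/√x) belongs to L log L((0,1)) (it is bounded, hence has finite entropy), but log(f) + 1 = 1 − 1/√x does not belong to L²((0,1)) and hence not to L_exp((0,1)). In particular, the formal Gâteaux derivative of the entropy E(f) = ∫ f log f dx at f is not an element of the dual space L_exp((0,1)). -/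
open MeasureTheory

lemma sqMeasurable : Measurable (fun x : ℝ => (1 - 1 / Real.sqrt x) ^ 2) := by
  fun_prop

lemma notIntSq : ¬ Integrable (fun x : ℝ => (1 - 1 / Real.sqrt x) ^ 2)
    (volume.restrict (Set.Ioo (0:ℝ) 1)) := by
  intro h
  have h' : IntegrableOn (fun x : ℝ => (1 - 1 / Real.sqrt x) ^ 2)
      (Set.Ioo (0:ℝ) 1) volume := h
  have h4 : IntegrableOn (fun x : ℝ => (1 - 1 / Real.sqrt x) ^ 2)
      (Set.Ioo (0:ℝ) (1/4)) volume :=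
    h'.mono_set (Set.Ioo_subset_Ioo le_rfl (by norm_num))
  have hrpow : IntegrableOn (fun x : ℝ => x ^ (-1 : ℝ)) (Set.Ioo (0:ℝ) (1/4)) volume := by
    apply Integrable.mono' (h4.const_mul 4)
    · exact ((measurable_id.pow_const _ : Measurable fun x : ℝ => x ^ (-1:ℝ))).aestronglyMeasurable
    · filter_upwards [ae_restrict_mem measurableSet_Ioo] with x hx
      obtain ⟨hx0, hx1⟩ := hx
      have hs : 0 < Real.sqrt x := Real.sqrt_pos.2 hx0
      have hs2 : Real.sqrt x < 1/2 := by
        have := Real.sqrt_lt_sqrt hx0.le hx1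
        rwa [show Real.sqrt (1/4) = 1/2 by
          rw [show (1:ℝ)/4 = (1/2)^2 by norm_num, Real.sqrt_sq (by norm_num)]] at this
      have hxval : x ^ (-1:ℝ) = 1 / x := by
        rw [Real.rpow_neg_one]; ring
      have hxpos : (0:ℝ) < x := hx0
      have hsq : Real.sqrt x ^ 2 = x := Real.sq_sqrt hx0.le
      rw [Real.norm_eq_abs, hxval, abs_of_pos (by positivity)]
      -- 1/x ≤ 4 * (1 - 1/√x)^2
      have key : 1 / x ≤ 4 * (1 - 1 / Real.sqrt x) ^ 2 := by
        have h1 : 1 / Real.sqrt x > 2 := by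
          rw [gt_iff_lt, lt_div_iff₀ hs]; linarith
        have h2 : (1 - 1 / Real.sqrt x) ^ 2 = (1 / Real.sqrt x - 1) ^ 2 := by ring
        rw [h2]
        have h3 : 1 / (2 * Real.sqrt x) ≤ 1 / Real.sqrt x - 1 := by
          rw [div_sub' hs.ne', div_le_div_iff₀ (by positivity) hs]
          nlinarith
        have h5 : (1 / (2 * Real.sqrt x)) ^ 2 ≤ (1 / Real.sqrt x - 1) ^ 2 := by
          apply pow_le_pow_left₀ (by positivity) h3
        have h6 : (1 / (2 * Real.sqrt x)) ^ 2 = 1 / (4 * x) := by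
          rw [div_pow, one_pow, mul_pow]; rw [hsq]; norm_num
        rw [h6] at h5
        have h7 : 1 / x = 4 * (1 / (4 * x)) := by field_simp
        linarith
      exact key
  rw [intervalIntegral.integrableOn_Ioo_rpow_iff (by norm_num)] at hrpow
  linarith

lemma phi_lower {s : ℝ} (hs : 0 ≤ s) : s ^ 2 ≤ 4 * PhiExp s := by
  unfold PhiExp
  split_ifs with h
  · nlinarith
  · push_neg at h
    have ht : 0 ≤ s - 1 := by linarith
    have h1 : 1 + (s - 1) / 2 ≤ Real.exp ((s - 1) / 2) := by
      have := Real.add_one_le_exp ((s - 1) / 2); linarith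
    have h2 : Real.exp (s - 1) = Real.exp ((s - 1) / 2) ^ 2 := by
      rw [← Real.exp_nat_mul]; ring_nf
    nlinarith [Real.exp_pos ((s - 1) / 2)]

lemma memLexp_integrable_sq {f : ℝ → ℝ} (hf : Measurable f) {μ : Measure ℝ}
    (h : MemLexp μ f) : Integrable (fun x => f x ^ 2) μ := by
  obtain ⟨γ, hγ, hint⟩ := h
  refine ⟨(hf.pow_const 2).aestronglyMeasurable, ?_⟩
  rw [hasFiniteIntegral_iff_ofReal (ae_of_all _ fun x => sq_nonneg _)]
  have key : ∀ x, ENNReal.ofReal (f x ^ 2) ≤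
      ENNReal.ofReal (4 * γ ^ 2) * ENNReal.ofReal (PhiExp (|f x| / γ)) := by
    intro x
    rw [← ENNReal.ofReal_mul (by positivity)]
    apply ENNReal.ofReal_le_ofReal
    have hs : 0 ≤ |f x| / γ := by positivity
    have := phi_lower hs
    have heq : f x ^ 2 = γ ^ 2 * (|f x| / γ) ^ 2 := by
      rw [div_pow, sq_abs]; field_simp
    rw [heq]; nlinarith
  calc ∫⁻ x, ENNReal.ofReal (f x ^ 2) ∂μ
      ≤ ∫⁻ x, ENNReal.ofReal (4 * γ ^ 2) * ENNReal.ofReal (PhiExp (|f x| / γ)) ∂μ :=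
        lintegral_mono key
    _ = ENNReal.ofReal (4 * γ ^ 2) * ∫⁻ x, ENNReal.ofReal (PhiExp (|f x| / γ)) ∂μ :=
        lintegral_const_mul' _ _ ENNReal.ofReal_ne_top
    _ ≤ ENNReal.ofReal (4 * γ ^ 2) * 1 := by gcongr
    _ < ⊤ := by rw [mul_one]; exact ENNReal.ofReal_lt_top

/-- The function `f(x) = exp(-1/√x)` belongs to `L log L((0,1))`, but its formal
entropy gradient `log f + 1 = 1 - 1/√x` is neither in `L²((0,1))` nor in `L_exp((0,1))`. -/
theorem entropy_not_gateaux_differentiable :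
    (∫⁻ x in Set.Ioo (0:ℝ) 1,
        ENNReal.ofReal (Real.exp (-(1 / Real.sqrt x)) *
          logPlus (Real.exp (-(1 / Real.sqrt x)))) < ⊤) ∧
    ¬ MemLp (fun x : ℝ => 1 - 1 / Real.sqrt x) 2 (volume.restrict (Set.Ioo 0 1)) ∧
    ¬ MemLexp (volume.restrict (Set.Ioo (0:ℝ) 1)) (fun x => 1 - 1 / Real.sqrt x) := by
  refine ⟨?_, ?_, ?_⟩
  · have : ∀ x ∈ Set.Ioo (0:ℝ) 1,
        ENNReal.ofReal (Real.exp (-(1 / Real.sqrt x)) *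
          logPlus (Real.exp (-(1 / Real.sqrt x)))) = 0 := by
      intro x hx
      have hs : 0 < Real.sqrt x := Real.sqrt_pos.2 hx.1
      have hlog : logPlus (Real.exp (-(1 / Real.sqrt x))) = 0 := by
        unfold logPlus
        rw [Real.log_exp]
        apply max_eq_right
        have : 0 ≤ 1 / Real.sqrt x := by positivity
        linarith
      rw [hlog, mul_zero, ENNReal.ofReal_zero]
    have hz : (∫⁻ x in Set.Ioo (0:ℝ) 1,
        ENNReal.ofReal (Real.exp (-(1 / Real.sqrt x)) *
          logPlus (Real.exp (-(1 / Real.sqrt x))))) =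
        ∫⁻ _ in Set.Ioo (0:ℝ) 1, (0:ENNReal) :=
      setLIntegral_congr_fun measurableSet_Ioo this
    rw [hz]
    simp
  · intro h
    have hm : AEStronglyMeasurable (fun x : ℝ => 1 - 1 / Real.sqrt x)
        (volume.restrict (Set.Ioo (0:ℝ) 1)) := h.aestronglyMeasurable
    have := (memLp_two_iff_integrable_sq hm).1 h
    exact notIntSq this
  · intro h
    have hf : Measurable (fun x : ℝ => 1 - 1 / Real.sqrt x) := by fun_prop
    exact notIntSq (memLexp_integrable_sq hf h)
end
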